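/- Let κ be a cardinal with cf(κ) > ω₁, and let K be a compact Hausdorff scattered space such that C(K) has density κ. Then for every family {f_ξ : ξ < κ} ⊆ C(K) there exist a set A ⊆ κ of cardinality κ and two distinct points x, y ∈ K such that f_ξ(x) = f_ξ(y) for all ξ ∈ A. Consequently C(K) does not admit an overcomplete set. -/

import Mathlib

open Cardinal Set

universe u

/-- The density character of a topological space: the least cardinality of a dense subset. -/
noncomputable def dens (X : Type u) [TopologicalSpace X] : Cardinal.{u} :=
  ⨅ s : {s : Set X // Dense s}, Cardinal.mk ↥(s.1)

/-- A set is linearly dense if its closed linear span is the whole space. -/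
def LinearlyDense {X : Type u} [NormedAddCommGroup X] [NormedSpace ℝ X] (S : Set X) : Prop :=
  (Submodule.span ℝ S).topologicalClosure = ⊤

/-- A set `Y` is overcomplete in `X` if `|Y| = dens X` and every subset of `Y` of full
cardinality is linearly dense in `X`. -/
def Overcomplete {X : Type u} [NormedAddCommGroup X] [NormedSpace ℝ X] (Y : Set X) : Prop :=
  Cardinal.mk ↥Y = dens X ∧ ∀ Z ⊆ Y, Cardinal.mk ↥Z = Cardinal.mk ↥Y → LinearlyDense Z

/-- A topological space is scattered if every nonempty subset has a point isolated in it. -/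
def Scattered (K : Type u) [TopologicalSpace K] : Prop :=
  ∀ S : Set K, S.Nonempty → ∃ x ∈ S, ∃ U : Set K, IsOpen U ∧ U ∩ S = {x}

/-- In a separable space the density character is countable. -/
lemma dens_le_aleph0 (X : Type u) [TopologicalSpace X]
    [TopologicalSpace.SeparableSpace X] : dens X ≤ Cardinal.aleph0 := by
  obtain ⟨s, hsc, hsd⟩ := TopologicalSpace.exists_countable_dense X
  refine le_trans (ciInf_le (OrderBot.bddBelow _) (⟨s, hsd⟩ : {s : Set X // Dense s})) ?_
  exact Cardinal.mk_le_aleph0_iff.mpr hsc.to_subtype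

/-- Every continuous real-valued function on a compact scattered space has countable range. -/
lemma scattered_range_countable {K : Type u} [TopologicalSpace K] [CompactSpace K]
    [T2Space K] (hK : Scattered K) (f : C(K, ℝ)) : (Set.range f).Countable := by
  by_contra hunc
  have hcl : IsClosed (Set.range f) := (isCompact_range (map_continuous f)).isClosed
  obtain ⟨V, D, hV, hD, hVD⟩ := exists_countable_union_perfect_of_isClosed hcl
  have hDne : D.Nonempty := by
    rcases D.eq_empty_or_nonempty with h | h
    · exact absurd (hVD ▸ (by simpa [h] using hV)) hunc
    · exact h
  have hDsub : D ⊆ Set.range f := hVD ▸ subset_union_right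
  -- Zorn: a minimal closed subset of `K` mapping onto `D`
  set S : Set (Set K) := {C | IsClosed C ∧ f '' C = D} with hS
  have hx : f ⁻¹' D ∈ S := by
    refine ⟨hD.closed.preimage (map_continuous f), ?_⟩
    rw [Set.image_preimage_eq_inter_range]
    exact Set.inter_eq_self_of_subset_left hDsub
  have hchains : ∀ c ⊆ S, IsChain (· ⊆ ·) c → c.Nonempty → ∃ lb ∈ S, ∀ s ∈ c, lb ⊆ s := by
    intro c hcS hchain hcne
    refine ⟨⋂₀ c, ⟨isClosed_sInter fun C hC => (hcS hC).1, ?_⟩, fun s hs => Set.sInter_subset_of_mem hs⟩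
    apply le_antisymm
    · obtain ⟨C, hC⟩ := hcne
      exact le_trans (Set.image_mono (Set.sInter_subset_of_mem hC)) (hcS hC).2.le
    · intro p hp
      have hne : Nonempty c := Set.Nonempty.to_subtype hcne
      set t : c → Set K := fun C => C.1 ∩ f ⁻¹' {p} with ht
      have hdir : Directed (· ⊇ ·) t := by
        intro C₁ C₂
        rcases hchain.total C₁.2 C₂.2 with h | h
        · exact ⟨C₁, Set.Subset.rfl, Set.inter_subset_inter_left _ h⟩
        · exact ⟨C₂, Set.inter_subset_inter_left _ h, Set.Subset.rfl⟩
      have htne : ∀ C : c, (t C).Nonempty := by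
        intro C
        have hpC : p ∈ f '' C.1 := (hcS C.2).2.symm ▸ hp
        obtain ⟨z, hz, hfz⟩ := hpC
        exact ⟨z, hz, by simp [hfz]⟩
      have hcompact : ∀ C : c, IsCompact (t C) :=
        fun C => ((((hcS C.2).1).inter ((isClosed_singleton).preimage (map_continuous f)))).isCompact
      have hclosed : ∀ C : c, IsClosed (t C) :=
        fun C => ((hcS C.2).1).inter ((isClosed_singleton).preimage (map_continuous f))
      obtain ⟨z, hz⟩ := IsCompact.nonempty_iInter_of_directed_nonempty_isCompact_isClosed
        t hdir htne hcompact hclosed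
      simp only [Set.mem_iInter] at hz
      refine ⟨z, ?_, ?_⟩
      · exact Set.mem_sInter.mpr fun C hC => (hz ⟨C, hC⟩).1
      · have := (hz hne.some).2
        simpa using this
  obtain ⟨m, -, hmin⟩ := zorn_superset_nonempty S hchains _ hx
  obtain ⟨hmcl, hmD⟩ := hmin.prop
  have hmne : m.Nonempty := by
    rcases m.eq_empty_or_nonempty with h | h
    · rw [h] at hmD; simp at hmD; exact absurd hmD.symm (Set.nonempty_iff_ne_empty.mp hDne)
    · exact h
  obtain ⟨x, hxm, U, hU, hUm⟩ := hK m hmne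
  set D' : Set K := m \ U with hD'
  have hD'cl : IsClosed D' := hmcl.sdiff hU
  have hxU : x ∈ U := by
    have : x ∈ U ∩ m := hUm ▸ rfl
    exact this.1
  have hne : f '' D' ≠ D := by
    intro h
    have hmm : m ⊆ D' := hmin.2 ⟨hD'cl, h⟩ Set.diff_subset
    exact (hmm hxm).2 hxU
  obtain ⟨p, hpD, hpn⟩ : ∃ p ∈ D, p ∉ f '' D' := by
    by_contra h
    push_neg at h
    refine hne (le_antisymm ?_ h)
    rw [← hmD]
    exact Set.image_mono Set.diff_subset
  have hcomp : IsCompact (f '' D') := (hD'cl.isCompact).image (map_continuous f)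
  have hWopen : IsOpen (f '' D')ᶜ := hcomp.isClosed.isOpen_compl
  have hacc := hD.acc p hpD
  rw [accPt_iff_nhds] at hacc
  obtain ⟨q, ⟨hqW, hqD⟩, hqp⟩ := hacc _ (hWopen.mem_nhds hpn)
  -- q and p both come from the single isolated point x, contradiction
  have key : ∀ r ∈ D, r ∉ f '' D' → r = f x := by
    intro r hrD hrn
    obtain ⟨z, hzm, rfl⟩ := (hmD ▸ hrD : r ∈ f '' m)
    have hzU : z ∈ U := by
      by_contra hz
      exact hrn ⟨z, ⟨hzm, hz⟩, rfl⟩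
    have : z ∈ ({x} : Set K) := hUm ▸ ⟨hzU, hzm⟩
    rw [this]
  have hq := key q hqD hqW
  have hp := key p hpD hpn
  exact hqp (hq.trans hp.symm)

/-- If fewer than `cf κ` many subsets of a `κ`-sized index type each have size `< κ`,
some index avoids them all. -/
lemma exists_not_in_union {ι : Type u} {κ : Cardinal.{u}} (hι : Cardinal.mk ι = κ)
    (hκ0 : Cardinal.aleph0 < κ) {P : Type u} (hP : Cardinal.mk P < (κ.ord).cof)
    (hPκ : Cardinal.mk P < κ) (g : P → Set ι) (hg : ∀ p, Cardinal.mk (g p) < κ) :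
    ∃ ξ, ∀ p, ξ ∉ g p := by
  classical
  by_contra h
  push_neg at h
  have hU : ⋃ p, g p = Set.univ := Set.eq_univ_of_forall fun ξ => Set.mem_iUnion.mpr (h ξ)
  have h1 : κ ≤ Cardinal.mk (⋃ p, g p) := by rw [hU, Cardinal.mk_univ, hι]
  have h2 : Cardinal.mk (⋃ p, g p) ≤ Cardinal.mk P * ⨆ p, Cardinal.mk (g p) :=
    Cardinal.mk_iUnion_le g
  have hsup : (⨆ p, Cardinal.mk (g p)) < κ := Ordinal.iSup_lt hP hg
  have h3 : Cardinal.mk P * (⨆ p, Cardinal.mk (g p)) < κ :=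
    Cardinal.mul_lt_of_lt hκ0.le hPκ hsup
  exact absurd (h1.trans h2) h3.not_ge

lemma main_pair {K : Type u} [TopologicalSpace K] [CompactSpace K] [T2Space K]
    (hK : Scattered K) {κ : Cardinal.{u}}
    (hcf : Cardinal.aleph 1 < (κ.ord).cof) (hdens : dens C(K, ℝ) = κ)
    {ι : Type u} (hι : Cardinal.mk ι = κ) (f : ι → C(K, ℝ)) :
    ∃ A : Set ι, Cardinal.mk ↥A = κ ∧ ∃ x y : K, x ≠ y ∧ ∀ ξ ∈ A, f ξ x = f ξ y := by
  classical
  have hκ1 : Cardinal.aleph 1 < κ := hcf.trans_le (Ordinal.cof_ord_le κ)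
  have hκ0 : Cardinal.aleph0 < κ := Cardinal.aleph0_lt_aleph_one.trans hκ1
  by_cases hpair : ∃ x y : K, x ≠ y ∧ Cardinal.mk {ξ | f ξ x = f ξ y} = κ
  · obtain ⟨x, y, hxy, hA⟩ := hpair
    exact ⟨_, hA, x, y, hxy, fun ξ hξ => hξ⟩
  push_neg at hpair
  exfalso
  have hsmall : ∀ x y : K, x ≠ y → Cardinal.mk {ξ | f ξ x = f ξ y} < κ := fun x y hxy =>
    lt_of_le_of_ne (hι ▸ Cardinal.mk_set_le _) (hpair x y hxy)
  have hcount : ∀ ξ, (Set.range (f ξ)).Countable := fun ξ => scattered_range_countable hK (f ξ)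
  rcases lt_or_ge (Cardinal.mk K) (Cardinal.aleph 1) with hk | hk
  · -- `K` is countable: some `f ξ₀` is injective, so `K` is metrizable and `C(K)` separable
    have hKc : Countable K := by
      have : (Set.univ : Set K).Countable :=
        (Cardinal.countable_iff_lt_aleph_one _).mpr (by rwa [Cardinal.mk_univ])
      exact Set.countable_univ_iff.mp this
    set g : K × K → Set ι := fun p =>
      if p.1 = p.2 then ∅ else {ξ | f ξ p.1 = f ξ p.2} with hg
    have hglt : ∀ p, Cardinal.mk (g p) < κ := by
      intro p
      by_cases h : p.1 = p.2
      · simp only [hg, if_pos h, Cardinal.mk_emptyCollection]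
        exact (Cardinal.aleph0_pos).trans hκ0
      · simpa only [hg, if_neg h] using hsmall p.1 p.2 h
    obtain ⟨ξ₀, hξ₀⟩ := exists_not_in_union hι hκ0
      (lt_of_le_of_lt Cardinal.mk_le_aleph0 (Cardinal.aleph0_lt_aleph_one.trans hcf))
      (lt_of_le_of_lt Cardinal.mk_le_aleph0 hκ0) g hglt
    have hinj : Function.Injective (f ξ₀) := by
      intro a b hab
      by_contra hne
      have : ξ₀ ∈ g (a, b) := by simp only [hg, if_neg hne]; exact hab
      exact hξ₀ (a, b) this
    have hemb := (map_continuous (f ξ₀)).isClosedEmbedding hinj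
    have : SecondCountableTopology K :=
      hemb.toIsEmbedding.secondCountableTopology
    have : TopologicalSpace.SeparableSpace C(K, ℝ) := inferInstance
    exact absurd (hdens ▸ dens_le_aleph0 C(K, ℝ)) hκ0.not_ge
  · -- `K` has at least `ℵ₁` points: some `f ξ₀` is injective on them, contradicting
    -- countability of its range
    obtain ⟨e⟩ : Nonempty ((Cardinal.aleph 1).out ↪ K) :=
      Cardinal.le_def _ _ |>.mp (by rwa [Cardinal.mk_out])
    set g : (Cardinal.aleph 1).out × (Cardinal.aleph 1).out → Set ι := fun p =>
      if e p.1 = e p.2 then ∅ else {ξ | f ξ (e p.1) = f ξ (e p.2)} with hg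
    have hglt : ∀ p, Cardinal.mk (g p) < κ := by
      intro p
      by_cases h : e p.1 = e p.2
      · simp only [hg, if_pos h, Cardinal.mk_emptyCollection]
        exact (Cardinal.aleph0_pos).trans hκ0
      · simpa only [hg, if_neg h] using hsmall _ _ h
    have hPcard : Cardinal.mk ((Cardinal.aleph 1).out × (Cardinal.aleph 1).out)
        = Cardinal.aleph 1 := by
      rw [Cardinal.mk_prod, Cardinal.mk_out, Cardinal.lift_id]
      exact Cardinal.mul_eq_self (Cardinal.aleph0_le_aleph 1)
    obtain ⟨ξ₀, hξ₀⟩ := exists_not_in_union hι hκ0 (by rwa [hPcard]) (by rwa [hPcard]) g hglt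
    have hinj : Function.Injective (fun a => f ξ₀ (e a)) := by
      intro a b hab
      by_contra hne
      have heab : e a ≠ e b := fun h => hne (e.injective h)
      have : ξ₀ ∈ g (a, b) := by simp only [hg, if_neg heab]; exact hab
      exact hξ₀ (a, b) this
    have h1 : Cardinal.aleph 1 ≤ Cardinal.aleph0 := by
      have hc : Countable (Set.range (f ξ₀)) := (hcount ξ₀).to_subtype
      have hcK : Countable ((Cardinal.aleph 1 : Cardinal.{u}).out) := by
        refine Function.Injective.countable (f := fun a =>
          (⟨f ξ₀ (e a), Set.mem_range_self _⟩ : Set.range (f ξ₀))) ?_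
        exact fun a b h => hinj (congrArg Subtype.val h)
      have := Cardinal.mk_le_aleph0_iff.mpr hcK
      rwa [Cardinal.mk_out] at this
    exact absurd h1 Cardinal.aleph0_lt_aleph_one.not_ge

/-- The submodule of functions taking equal values at `x` and `y`. -/
def eqAt {K : Type u} [TopologicalSpace K] (x y : K) : Submodule ℝ C(K, ℝ) where
  carrier := {h | h x = h y}
  add_mem' := by
    intro a b ha hb
    simp only [Set.mem_setOf_eq, ContinuousMap.add_apply] at *
    rw [ha, hb]
  zero_mem' := rfl
  smul_mem' := by
    intro c a ha
    simp only [Set.mem_setOf_eq, ContinuousMap.smul_apply] at *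
    rw [ha]

theorem stmt16 {K : Type u} [TopologicalSpace K] [CompactSpace K] [T2Space K]
    (hK : Scattered K) {κ : Cardinal.{u}}
    (hcf : Cardinal.aleph 1 < (κ.ord).cof) (hdens : dens C(K, ℝ) = κ)
    {ι : Type u} (hι : Cardinal.mk ι = κ) :
    (∀ f : ι → C(K, ℝ), ∃ A : Set ι, Cardinal.mk ↥A = κ ∧
      ∃ x y : K, x ≠ y ∧ ∀ ξ ∈ A, f ξ x = f ξ y) ∧
    ¬ ∃ Y : Set C(K, ℝ), Overcomplete Y := by
  refine ⟨main_pair hK hcf hdens hι, ?_⟩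
  rintro ⟨Y, hYcard, hYdense⟩
  have hYκ : Cardinal.mk ↥Y = κ := hYcard.trans hdens
  obtain ⟨A, hAcard, x, y, hxy, hAeq⟩ :=
    main_pair hK hcf hdens hYκ (fun g : ↥Y => (g : C(K, ℝ)))
  set Z : Set C(K, ℝ) := Subtype.val '' A with hZ
  have hZY : Z ⊆ Y := by
    rintro g ⟨a, -, rfl⟩
    exact a.2
  have hZcard : Cardinal.mk ↥Z = Cardinal.mk ↥Y := by
    rw [hZ, Cardinal.mk_image_eq Subtype.val_injective, hAcard, hYκ]
  have hld : LinearlyDense Z := hYdense Z hZY hZcard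
  -- all elements of `Z` agree at `x` and `y`, hence so does everything in the closed span
  have hZsub : Z ⊆ (eqAt x y : Submodule ℝ C(K, ℝ)) := by
    rintro g ⟨a, ha, rfl⟩
    exact hAeq a ha
  have hclosed : IsClosed ((eqAt x y : Submodule ℝ C(K, ℝ)) : Set C(K, ℝ)) := by
    have : ((eqAt x y : Submodule ℝ C(K, ℝ)) : Set C(K, ℝ))
        = {h : C(K, ℝ) | h x = h y} := rfl
    rw [this]
    exact isClosed_eq (ContinuousEvalConst.continuous_eval_const x)
      (ContinuousEvalConst.continuous_eval_const y)
  have hle : (Submodule.span ℝ Z).topologicalClosure ≤ eqAt x y :=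
    Submodule.topologicalClosure_minimal _ (Submodule.span_le.mpr hZsub) hclosed
  rw [hld] at hle
  -- Urysohn gives a function separating `x` and `y`
  obtain ⟨g, hg0, hg1, -⟩ := exists_continuous_zero_one_of_isClosed
    (isClosed_singleton (x := x)) (isClosed_singleton (x := y))
    (Set.disjoint_singleton.mpr hxy)
  have hgmem : g ∈ eqAt x y := hle Submodule.mem_top
  have : (0 : ℝ) = 1 := by
    have h0 : g x = 0 := hg0 rfl
    have h1 : g y = 1 := hg1 rfl
    rw [← h0, ← h1]
    exact hgmem
  exact zero_ne_one this
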